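/- arXiv:1208.2691 — 2 statements merged into one kernel-verified Lean document; each statement's English description precedes it below -/
import Mathlib

section
/- For positive integers r < s, the confluent hypergeometric function satisfies ₁F₁(r; s; z) = (s−2)!(1−s)_r/(r−1)! · z^(1−s) · [ Σ_{k=0}^{s−r−1} z^k (−s+r+1)_k/(k!(2−s)_k) − e^z Σ_{k=0}^{r−1} (−z)^k (1−r)_k/(k!(2−s)_k) ], where (x)_k denotes the Pochhammer symbol (rising factorial). -/
open MeasureTheory ProbabilityTheory Real

/-- Heaviside step function. -/
noncomputable def heaviside (x : ℝ) : ℝ := if 0 ≤ x then 1 else 0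

/-- Kummer's confluent hypergeometric function ₁F₁(a; b; z). -/
noncomputable def hyp1F1 (a b z : ℝ) : ℝ :=
  ∑' n : ℕ, ((ascPochhammer ℝ n).eval a / ((ascPochhammer ℝ n).eval b * n.factorial)) * z ^ n

/-- The modified Bessel function of the first kind of order `ν`. -/
noncomputable def besselI (ν : ℝ) (x : ℝ) : ℝ :=
  ∑' m : ℕ, (x / 2) ^ (2 * (m : ℝ) + ν) / (m.factorial * Real.Gamma (m + ν + 1))

open Finset

private lemma sum_choose_succ (f : ℕ → ℝ) (r : ℕ) :
    ∑ k ∈ range (r+2), (-1:ℝ)^k * ((r+1).choose k : ℝ) * f k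
      = ∑ k ∈ range (r+1), (-1:ℝ)^k * (r.choose k : ℝ) * (f k - f (k+1)) := by
  set S0 := ∑ k ∈ range (r+1), (-1:ℝ)^k * (r.choose k : ℝ) * f k with hS0
  set S1 := ∑ k ∈ range (r+1), (-1:ℝ)^k * (r.choose k : ℝ) * f (k+1) with hS1
  set S2 := ∑ k ∈ range (r+1), (-1:ℝ)^k * (r.choose (k+1) : ℝ) * f (k+1) with hS2
  have ha : ∑ k ∈ range (r+2), (-1:ℝ)^k * ((r+1).choose k : ℝ) * f k = f 0 - S1 - S2 := by
    rw [Finset.sum_range_succ' (fun k => (-1:ℝ)^k * ((r+1).choose k : ℝ) * f k) (r+1)]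
    have hcong : ∀ k ∈ range (r+1), (-1:ℝ)^(k+1) * ((r+1).choose (k+1) : ℝ) * f (k+1)
        = (-((-1:ℝ)^k * (r.choose k : ℝ) * f (k+1))) + (-((-1:ℝ)^k * (r.choose (k+1) : ℝ) * f (k+1))) := by
      intro k _
      have h := Nat.choose_succ_succ r k
      push_cast [h]
      ring
    rw [Finset.sum_congr rfl hcong, Finset.sum_add_distrib, Finset.sum_neg_distrib,
      Finset.sum_neg_distrib, ← hS1, ← hS2]
    simp
    ring
  have hb : S0 = f 0 - S2 := by
    have h1 : ∑ k ∈ range (r+2), (-1:ℝ)^k * (r.choose k : ℝ) * f k = S0 := by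
      rw [Finset.sum_range_succ, Nat.choose_succ_self, ← hS0]
      simp
    have h2 := Finset.sum_range_succ' (fun k => (-1:ℝ)^k * (r.choose k : ℝ) * f k) (r+1)
    rw [h1] at h2
    rw [h2]
    have hcong : ∀ k ∈ range (r+1), (-1:ℝ)^(k+1) * (r.choose (k+1) : ℝ) * f (k+1)
        = -((-1:ℝ)^k * (r.choose (k+1) : ℝ) * f (k+1)) := by
      intro k _; ring
    rw [Finset.sum_congr rfl hcong, Finset.sum_neg_distrib, ← hS2]
    simp
    ring
  have hc : ∑ k ∈ range (r+1), (-1:ℝ)^k * (r.choose k : ℝ) * (f k - f (k+1)) = S0 - S1 := by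
    rw [← Finset.sum_sub_distrib]
    exact Finset.sum_congr rfl (fun k _ => by ring)
  rw [ha, hc, hb]
  ring

private lemma A_real : ∀ (r t n : ℕ), n ≤ r + t →
    ∑ k ∈ range (r+1), (-1:ℝ)^k * (r.choose k : ℝ) *
      (if k ≤ n then ((r + t - k).factorial : ℝ) / ((n - k).factorial : ℝ) else 0)
      = (t.choose n : ℝ) * ((r + t - n).factorial : ℝ) := by
  intro r
  induction r with
  | zero =>
    intro t n hn
    simp only [zero_add] at hn ⊢
    rw [Finset.sum_range_one]
    simp only [pow_zero, Nat.choose_zero_right, Nat.cast_one, one_mul, Nat.zero_le, if_pos,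
      Nat.sub_zero]
    have hn' : (n.factorial : ℝ) ≠ 0 := by positivity
    have h' : t.choose n * (t - n).factorial * n.factorial = t.factorial := by
      rw [Nat.mul_right_comm]; exact Nat.choose_mul_factorial_mul_factorial hn
    rw [div_eq_iff hn']
    exact_mod_cast h'.symm
  | succ r ih =>
    intro t n hn
    rcases n with _ | m
    · rw [Finset.sum_eq_single 0]
      · simp
      · intro k hk hk0
        rw [if_neg (by omega)]
        ring
      · intro h; simp at h
    · rw [sum_choose_succ]
      have hcong : ∀ k ∈ range (r+1),
          (-1:ℝ)^k * (r.choose k : ℝ) *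
            ((if k ≤ m+1 then ((r + 1 + t - k).factorial : ℝ) / ((m + 1 - k).factorial : ℝ) else 0)
             - (if k+1 ≤ m+1 then ((r + 1 + t - (k+1)).factorial : ℝ) / ((m + 1 - (k+1)).factorial : ℝ) else 0))
          = (-1:ℝ)^k * (r.choose k : ℝ) *
              (if k ≤ m+1 then ((r + (t+1) - k).factorial : ℝ) / ((m + 1 - k).factorial : ℝ) else 0)
            - (-1:ℝ)^k * (r.choose k : ℝ) *
              (if k ≤ m then ((r + t - k).factorial : ℝ) / ((m - k).factorial : ℝ) else 0) := by
        intro k hk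
        have e1 : r + 1 + t - k = r + (t+1) - k := by omega
        have e2 : r + 1 + t - (k+1) = r + t - k := by omega
        have e3 : m + 1 - (k+1) = m - k := by omega
        rw [e1, e2, e3]
        by_cases hkm : k ≤ m
        · rw [if_pos (by omega : k ≤ m + 1), if_pos (by omega : k + 1 ≤ m + 1), if_pos hkm]
          ring
        · by_cases hkm1 : k ≤ m + 1
          · rw [if_pos hkm1, if_neg (by omega), if_neg hkm]
            ring
          · rw [if_neg hkm1, if_neg (by omega), if_neg hkm]
            ring
      rw [Finset.sum_congr rfl hcong, Finset.sum_sub_distrib,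
        ih (t+1) (m+1) (by omega), ih t m (by omega)]
      have e5 : r + (t+1) - (m+1) = r + t - m := by omega
      have e6 : r + 1 + t - (m+1) = r + t - m := by omega
      rw [e5, e6, ← sub_mul]
      congr 1
      have h := Nat.choose_succ_succ t m
      push_cast [h]
      ring

private lemma B_real : ∀ (r t m : ℕ),
    ∑ k ∈ range (r+1), (-1:ℝ)^k * (r.choose k : ℝ) *
      (((r + t - k).factorial : ℝ) / ((m + r + t + 1 - k).factorial : ℝ))
      = (-1:ℝ)^r * ((m + r).factorial : ℝ) * (t.factorial : ℝ)
          / (((m + r + t + 1).factorial : ℝ) * (m.factorial : ℝ)) := by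
  intro r
  induction r with
  | zero =>
    intro t m
    rw [Finset.sum_range_one]
    simp only [pow_zero, Nat.choose_zero_right, Nat.cast_one, one_mul, Nat.add_zero, zero_add,
      Nat.sub_zero, Nat.zero_add, add_zero]
    have h1 : ((m + 0 + t + 1).factorial : ℝ) ≠ 0 := by positivity
    have h2 : (m.factorial : ℝ) ≠ 0 := by positivity
    field_simp
  | succ r ih =>
    intro t m
    rw [sum_choose_succ]
    have hcong : ∀ k ∈ range (r+1),
        (-1:ℝ)^k * (r.choose k : ℝ) *
          ((((r + 1 + t - k).factorial : ℝ) / ((m + (r+1) + t + 1 - k).factorial : ℝ))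
           - (((r + 1 + t - (k+1)).factorial : ℝ) / ((m + (r+1) + t + 1 - (k+1)).factorial : ℝ)))
        = (-1:ℝ)^k * (r.choose k : ℝ) *
            (((r + (t+1) - k).factorial : ℝ) / ((m + r + (t+1) + 1 - k).factorial : ℝ))
          - (-1:ℝ)^k * (r.choose k : ℝ) *
            (((r + t - k).factorial : ℝ) / ((m + r + t + 1 - k).factorial : ℝ)) := by
      intro k hk
      have e1 : r + 1 + t - k = r + (t+1) - k := by omega
      have e2 : m + (r+1) + t + 1 - k = m + r + (t+1) + 1 - k := by omega
      have e3 : r + 1 + t - (k+1) = r + t - k := by omega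
      have e4 : m + (r+1) + t + 1 - (k+1) = m + r + t + 1 - k := by omega
      rw [e1, e2, e3, e4]
      ring
    rw [Finset.sum_congr rfl hcong, Finset.sum_sub_distrib, ih (t+1) m, ih t m]
    have e5 : m + r + (t+1) + 1 = (m + r + t + 1) + 1 := by omega
    have e6 : m + (r+1) + t + 1 = (m + r + t + 1) + 1 := by omega
    have e7 : m + (r + 1) = (m + r) + 1 := by omega
    rw [e5, e6, e7, Nat.factorial_succ (m + r + t + 1), Nat.factorial_succ (m + r),
      Nat.factorial_succ t]
    have h1 : ((m + r + t + 1).factorial : ℝ) ≠ 0 := by positivity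
    have h2 : (m.factorial : ℝ) ≠ 0 := by positivity
    have h4 : ((m + r).factorial : ℝ) ≠ 0 := by positivity
    have h5 : (t.factorial : ℝ) ≠ 0 := by positivity
    push_cast
    field_simp
    ring

private lemma poch_nat_eval (m k : ℕ) :
    (ascPochhammer ℝ k).eval ((m : ℕ) : ℝ) = (m.ascFactorial k : ℝ) :=
  (Nat.cast_ascFactorial (S := ℝ) m k).symm

private lemma poch_neg_eval (m k : ℕ) (h : k ≤ m) :
    (ascPochhammer ℝ k).eval (-(m:ℝ)) = (-1:ℝ)^k * (m.factorial : ℝ) / ((m-k).factorial : ℝ) := by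
  rw [ascPochhammer_eval_neg_eq_descPochhammer, descPochhammer_eval_eq_descFactorial,
    eq_div_iff (by positivity : ((m-k).factorial : ℝ) ≠ 0), mul_assoc, ← Nat.cast_mul,
    mul_comm (m.descFactorial k), Nat.factorial_mul_descFactorial h]

private lemma ascFactorial_mono {m n : ℕ} (k : ℕ) (h : m ≤ n) :
    m.ascFactorial k ≤ n.ascFactorial k := by
  induction k with
  | zero => simp
  | succ k ih =>
    rw [Nat.ascFactorial_succ, Nat.ascFactorial_succ]
    exact Nat.mul_le_mul (by omega) ih

private lemma shift_tsum (d : ℕ) (g : ℕ → ℝ) :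
    ∑' n : ℕ, (if d ≤ n then g (n - d) else 0) = ∑' n : ℕ, g n := by
  have hinj : Function.Injective (fun n : ℕ => n + d) := fun a b hab => by
    simpa using hab
  have hsupp : Function.support (fun n : ℕ => if d ≤ n then g (n - d) else 0)
      ⊆ Set.range (fun n : ℕ => n + d) := by
    intro x hx
    by_cases hdx : d ≤ x
    · exact ⟨x - d, by simp; omega⟩
    · simp only [Function.mem_support, if_neg hdx, ne_eq, not_true_eq_false] at hx
  have h := Function.Injective.tsum_eq hinj (f := fun n : ℕ => if d ≤ n then g (n - d) else 0) hsupp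
  rw [← h]
  exact tsum_congr fun n => by simp

private lemma shift_summable (d : ℕ) (g : ℕ → ℝ) (hg : Summable g) :
    Summable (fun n : ℕ => if d ≤ n then g (n - d) else 0) := by
  have hinj : Function.Injective (fun n : ℕ => n + d) := fun a b hab => by simpa using hab
  have hvan : ∀ x ∉ Set.range (fun n : ℕ => n + d),
      (if d ≤ x then g (x - d) else 0) = 0 := by
    intro x hx
    rw [if_neg]
    intro hdx
    exact hx ⟨x - d, by simp; omega⟩
  have := (Function.Injective.summable_iff hinj hvan).1
  apply this
  apply hg.congr
  intro n
  simp

/-- For positive integers `r < s` and `z ≠ 0`,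
`₁F₁(r; s; z) = (s−2)!(1−s)_r/(r−1)! z^(1−s)
  [ Σ_{k=0}^{s−r−1} z^k (−s+r+1)_k/(k!(2−s)_k) − e^z Σ_{k=0}^{r−1} (−z)^k (1−r)_k/(k!(2−s)_k) ]`. -/
theorem hyp1F1_int_params (r s : ℕ) (hr : 0 < r) (hrs : r < s) (z : ℝ) (hz : z ≠ 0) :
    hyp1F1 r s z =
      ((s - 2).factorial * (ascPochhammer ℝ r).eval (1 - (s : ℝ)) / (r - 1).factorial) *
        z ^ (1 - (s : ℤ)) *
        ((∑ k ∈ Finset.range (s - r), z ^ k *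
            (ascPochhammer ℝ k).eval (-(s : ℝ) + r + 1) /
              (k.factorial * (ascPochhammer ℝ k).eval (2 - (s : ℝ)))) -
          Real.exp z * ∑ k ∈ Finset.range r, (-z) ^ k *
            (ascPochhammer ℝ k).eval (1 - (r : ℝ)) /
              (k.factorial * (ascPochhammer ℝ k).eval (2 - (s : ℝ)))) := by
  obtain ⟨r', rfl⟩ : ∃ r', r = r' + 1 := ⟨r - 1, by omega⟩
  obtain ⟨t, rfl⟩ : ∃ t, s = r' + t + 2 := ⟨s - r' - 2, by omega⟩
  clear hr hrs
  -- cast normalizations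
  have e1 : (1 : ℝ) - ((r' + 1 : ℕ) : ℝ) = -((r' : ℕ) : ℝ) := by push_cast; ring
  have e2 : (2 : ℝ) - ((r' + t + 2 : ℕ) : ℝ) = -((r' + t : ℕ) : ℝ) := by push_cast; ring
  have e3 : (1 : ℝ) - ((r' + t + 2 : ℕ) : ℝ) = -((r' + t + 1 : ℕ) : ℝ) := by push_cast; ring
  have e4 : -((r' + t + 2 : ℕ) : ℝ) + ((r' + 1 : ℕ) : ℝ) + 1 = -((t : ℕ) : ℝ) := by
    push_cast; ring
  simp only [e1, e2, e3, e4, Nat.add_sub_cancel,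
    show r' + t + 2 - (r' + 1) = t + 1 from by omega]
  -- abbreviations
  set H := hyp1F1 ((r' + 1 : ℕ) : ℝ) ((r' + t + 2 : ℕ) : ℝ) z with hHdef
  set Dc := (((r' + t).factorial : ℝ) *
      (ascPochhammer ℝ (r' + 1)).eval (-((r' + t + 1 : ℕ) : ℝ)) / ((r').factorial : ℝ)) with hDdef
  set Ps := ∑ k ∈ Finset.range (t + 1), z ^ k *
      (ascPochhammer ℝ k).eval (-((t : ℕ) : ℝ)) /
        ((k.factorial : ℝ) * (ascPochhammer ℝ k).eval (-((r' + t : ℕ) : ℝ))) with hPdef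
  set Qs := ∑ k ∈ Finset.range (r' + 1), (-z) ^ k *
      (ascPochhammer ℝ k).eval (-((r' : ℕ) : ℝ)) /
        ((k.factorial : ℝ) * (ascPochhammer ℝ k).eval (-((r' + t : ℕ) : ℝ))) with hQdef
  -- coefficient functions
  set c : ℕ → ℝ := fun n =>
    ((r' + 1).ascFactorial n : ℝ) / (((r' + t + 2).ascFactorial n : ℝ) * (n.factorial : ℝ))
    with hcdef
  set qc : ℕ → ℝ := fun k =>
    (-1:ℝ)^k * ((r').choose k : ℝ) * (((r' + t - k).factorial : ℝ) / ((r' + t).factorial : ℝ))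
    with hqcdef
  set pc : ℕ → ℝ := fun n =>
    ((t).choose n : ℝ) * (((r' + t - n).factorial : ℝ) / ((r' + t).factorial : ℝ)) with hpcdef
  -- nonzero facts
  have hfacne : ∀ j : ℕ, ((j.factorial : ℕ) : ℝ) ≠ 0 := fun j => by positivity
  -- hyp1F1 as series in c
  have hH : H = ∑' n : ℕ, c n * z ^ n := by
    rw [hHdef]
    unfold hyp1F1
    exact tsum_congr fun n => by
      rw [poch_nat_eval (r' + 1) n, poch_nat_eval (r' + t + 2) n, hcdef]
  -- value of the constant
  have hDval : Dc = (-1:ℝ)^(r' + 1) * ((r' + t).factorial : ℝ) * ((r' + t + 1).factorial : ℝ)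
      / ((t.factorial : ℝ) * ((r').factorial : ℝ)) := by
    rw [hDdef, poch_neg_eval (r' + t + 1) (r' + 1) (by omega),
      show r' + t + 1 - (r' + 1) = t from by omega]
    field_simp
  have hDne : Dc ≠ 0 := by
    rw [hDval]
    apply div_ne_zero
    · exact mul_ne_zero (mul_ne_zero (pow_ne_zero _ (by norm_num)) (hfacne _)) (hfacne _)
    · exact mul_ne_zero (hfacne _) (hfacne _)
  -- values of the finite sums
  have hQsum : Qs = ∑ k ∈ Finset.range (r' + 1), qc k * z ^ k := by
    rw [hQdef]
    refine Finset.sum_congr rfl fun k hk => ?_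
    rw [Finset.mem_range] at hk
    have hk' : k ≤ r' := by omega
    rw [poch_neg_eval r' k hk', poch_neg_eval (r' + t) k (by omega), hqcdef]
    have hC : ((r'.choose k : ℕ) : ℝ) * (k.factorial : ℝ) * (((r' - k).factorial : ℕ) : ℝ)
        = ((r'.factorial : ℕ) : ℝ) := by
      exact_mod_cast congrArg (Nat.cast (R := ℝ)) (Nat.choose_mul_factorial_mul_factorial hk')
    rw [← hC, neg_pow]
    have h1 : ((-1:ℝ))^k ≠ 0 := pow_ne_zero _ (by norm_num)
    field_simp
  have hPsum : Ps = ∑ k ∈ Finset.range (t + 1), pc k * z ^ k := by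
    rw [hPdef]
    refine Finset.sum_congr rfl fun k hk => ?_
    rw [Finset.mem_range] at hk
    have hk' : k ≤ t := by omega
    rw [poch_neg_eval t k hk', poch_neg_eval (r' + t) k (by omega), hpcdef]
    have hC : ((t.choose k : ℕ) : ℝ) * (k.factorial : ℝ) * (((t - k).factorial : ℕ) : ℝ)
        = ((t.factorial : ℕ) : ℝ) := by
      exact_mod_cast congrArg (Nat.cast (R := ℝ)) (Nat.choose_mul_factorial_mul_factorial hk')
    rw [← hC]
    have h1 : ((-1:ℝ))^k ≠ 0 := pow_ne_zero _ (by norm_num)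
    field_simp
  -- c in factorial form
  have hcval : ∀ m : ℕ, c m = (((m + r').factorial : ℝ) * ((r' + t + 1).factorial : ℝ))
      / (((r').factorial : ℝ) * ((m + r' + t + 1).factorial : ℝ) * (m.factorial : ℝ)) := by
    intro m
    have h1 : ((r').factorial : ℝ) * ((r' + 1).ascFactorial m : ℝ) = ((m + r').factorial : ℝ) := by
      rw [show m + r' = r' + m from by omega]
      exact_mod_cast congrArg (Nat.cast (R := ℝ)) (Nat.factorial_mul_ascFactorial r' m)
    have h2 : ((r' + t + 1).factorial : ℝ) * ((r' + t + 2).ascFactorial m : ℝ)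
        = ((m + r' + t + 1).factorial : ℝ) := by
      rw [show m + r' + t + 1 = r' + t + 1 + m from by omega]
      exact_mod_cast congrArg (Nat.cast (R := ℝ)) (Nat.factorial_mul_ascFactorial (r' + t + 1) m)
    have ha1 : ((r' + 1).ascFactorial m : ℝ) = ((m + r').factorial : ℝ) / ((r').factorial : ℝ) := by
      rw [eq_div_iff (hfacne r'), mul_comm]; exact h1
    have ha2 : ((r' + t + 2).ascFactorial m : ℝ)
        = ((m + r' + t + 1).factorial : ℝ) / ((r' + t + 1).factorial : ℝ) := by
      rw [eq_div_iff (hfacne (r' + t + 1)), mul_comm]; exact h2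
    rw [hcdef]
    simp only
    rw [ha1, ha2]
    have hb1 : ((m + r' + t + 1).factorial : ℝ) ≠ 0 := hfacne _
    field_simp
  -- summability of the main series
  have hsc : Summable (fun n : ℕ => c n * z ^ n) := by
    apply Summable.of_norm_bounded (Real.summable_pow_div_factorial |z|)
    intro n
    have hpos1 : (0:ℝ) < ((r' + t + 2).ascFactorial n : ℝ) := by
      exact_mod_cast Nat.ascFactorial_pos (r' + t + 1) n
    have hpos2 : (0:ℝ) < (n.factorial : ℝ) := by positivity
    have hmono : ((r' + 1).ascFactorial n : ℝ) ≤ ((r' + t + 2).ascFactorial n : ℝ) := by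
      exact_mod_cast ascFactorial_mono n (by omega)
    have hposa : (0:ℝ) ≤ ((r' + 1).ascFactorial n : ℝ) := by positivity
    have hcn : c n ≤ 1 / (n.factorial : ℝ) := by
      rw [hcdef]
      simp only
      rw [div_le_div_iff₀ (by positivity) hpos2]
      calc ((r' + 1).ascFactorial n : ℝ) * (n.factorial : ℝ)
          ≤ ((r' + t + 2).ascFactorial n : ℝ) * (n.factorial : ℝ) :=
            mul_le_mul_of_nonneg_right hmono (le_of_lt hpos2)
        _ = 1 * (((r' + t + 2).ascFactorial n : ℝ) * (n.factorial : ℝ)) := by ring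
    have hcn0 : 0 ≤ c n := by
      rw [hcdef]; positivity
    rw [norm_mul, norm_pow, Real.norm_eq_abs, Real.norm_eq_abs, abs_of_nonneg hcn0]
    calc c n * |z| ^ n ≤ (1 / (n.factorial : ℝ)) * |z| ^ n :=
          mul_le_mul_of_nonneg_right hcn (by positivity)
      _ = |z| ^ n / (n.factorial : ℝ) := by ring
  -- exp as a shifted series
  have hexp : Real.exp z = ∑' n : ℕ, z ^ n / (n.factorial : ℝ) := by
    rw [Real.exp_eq_exp_ℝ, NormedSpace.exp_eq_tsum_div]
  have hexp_shift : ∀ k : ℕ,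
      ∑' n : ℕ, (if k ≤ n then z ^ n / (((n - k).factorial : ℕ) : ℝ) else 0)
        = z ^ k * Real.exp z := by
    intro k
    calc ∑' n : ℕ, (if k ≤ n then z ^ n / (((n - k).factorial : ℕ) : ℝ) else 0)
        = ∑' n : ℕ, (if k ≤ n then (fun m => z ^ (m + k) / ((m.factorial : ℕ) : ℝ)) (n - k) else 0) := by
          apply tsum_congr; intro n
          by_cases hn : k ≤ n
          · simp only [if_pos hn]
            rw [show n - k + k = n from by omega]
          · simp [hn]
      _ = ∑' m : ℕ, z ^ (m + k) / ((m.factorial : ℕ) : ℝ) :=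
          shift_tsum k (fun m => z ^ (m + k) / ((m.factorial : ℕ) : ℝ))
      _ = ∑' m : ℕ, (z ^ m / ((m.factorial : ℕ) : ℝ)) * z ^ k := by
          apply tsum_congr; intro m; rw [pow_add]; ring
      _ = (∑' m : ℕ, z ^ m / ((m.factorial : ℕ) : ℝ)) * z ^ k := tsum_mul_right
      _ = z ^ k * Real.exp z := by rw [← hexp]; ring
  -- summability of the pieces
  have hQk : ∀ k : ℕ, Summable (fun n : ℕ =>
      qc k * (if k ≤ n then z ^ n / (((n - k).factorial : ℕ) : ℝ) else 0)) := by
    intro k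
    apply Summable.mul_left
    have hg : Summable (fun m : ℕ => z ^ (m + k) / ((m.factorial : ℕ) : ℝ)) := by
      apply ((Real.summable_pow_div_factorial z).mul_right (z ^ k)).congr
      intro m; rw [pow_add]; ring
    apply (shift_summable k _ hg).congr
    intro n
    by_cases hn : k ≤ n
    · simp only [if_pos hn]
      rw [show n - k + k = n from by omega]
    · simp [hn]
  have hHs : Summable (fun n : ℕ =>
      (if r' + t + 1 ≤ n then c (n - (r' + t + 1)) * z ^ n else 0) / Dc) := by
    apply Summable.div_const
    have hg : Summable (fun m : ℕ => c m * z ^ m * z ^ (r' + t + 1)) := hsc.mul_right _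
    apply (shift_summable (r' + t + 1) _ hg).congr
    intro n
    by_cases hn : r' + t + 1 ≤ n
    · simp only [if_pos hn]
      rw [mul_assoc, ← pow_add, show n - (r' + t + 1) + (r' + t + 1) = n from by omega]
    · simp [hn]
  -- the pointwise core identity
  have hcore : ∀ n : ℕ,
      (if r' + t + 1 ≤ n then c (n - (r' + t + 1)) * z ^ n else 0) / Dc
        + ∑ k ∈ Finset.range (r' + 1),
            qc k * (if k ≤ n then z ^ n / (((n - k).factorial : ℕ) : ℝ) else 0)
        = (if n < t + 1 then pc n * z ^ n else 0) := by
    intro n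
    by_cases hn : r' + t + 1 ≤ n
    · obtain ⟨m, rfl⟩ : ∃ m, n = m + (r' + t + 1) := ⟨n - (r' + t + 1), by omega⟩
      rw [if_pos hn, if_neg (by omega), Nat.add_sub_cancel]
      have hsum : ∑ k ∈ Finset.range (r' + 1),
          qc k * (if k ≤ m + (r' + t + 1) then
            z ^ (m + (r' + t + 1)) / (((m + (r' + t + 1) - k).factorial : ℕ) : ℝ) else 0)
          = ((-1:ℝ)^r' * ((m + r').factorial : ℝ) * (t.factorial : ℝ)
              / (((m + r' + t + 1).factorial : ℝ) * (m.factorial : ℝ)))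
            * (z ^ (m + (r' + t + 1)) / ((r' + t).factorial : ℝ)) := by
        rw [← B_real r' t m, Finset.sum_mul]
        refine Finset.sum_congr rfl fun k hk => ?_
        rw [Finset.mem_range] at hk
        rw [if_pos (by omega), show m + (r' + t + 1) - k = m + r' + t + 1 - k from by omega,
          hqcdef]
        ring
      rw [hsum, hcval m, hDval]
      rcases Nat.even_or_odd r' with hpar | hpar
      · rw [hpar.neg_one_pow, hpar.add_one.neg_one_pow]
        field_simp
        ring
      · rw [hpar.neg_one_pow, hpar.add_one.neg_one_pow]
        field_simp
        ring
    · rw [if_neg hn, zero_div, zero_add]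
      have hsum : ∑ k ∈ Finset.range (r' + 1),
          qc k * (if k ≤ n then z ^ n / (((n - k).factorial : ℕ) : ℝ) else 0)
          = ((t.choose n : ℝ) * ((r' + t - n).factorial : ℝ))
              * (z ^ n / ((r' + t).factorial : ℝ)) := by
        rw [← A_real r' t n (by omega), Finset.sum_mul]
        refine Finset.sum_congr rfl fun k hk => ?_
        by_cases hkn : k ≤ n
        · rw [if_pos hkn, if_pos hkn, hqcdef]
          ring
        · rw [if_neg hkn, if_neg hkn, hqcdef]
          ring
      rw [hsum]
      by_cases hnt : n < t + 1
      · rw [if_pos hnt, hpcdef]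
        ring
      · rw [if_neg hnt, Nat.choose_eq_zero_of_lt (by omega)]
        simp
  -- assembling the key identity
  have key : (∑' n : ℕ, (if r' + t + 1 ≤ n then c (n - (r' + t + 1)) * z ^ n else 0)) / Dc
      + Real.exp z * Qs = Ps := by
    rw [hQsum, hPsum]
    calc (∑' n : ℕ, (if r' + t + 1 ≤ n then c (n - (r' + t + 1)) * z ^ n else 0)) / Dc
        + Real.exp z * ∑ k ∈ Finset.range (r' + 1), qc k * z ^ k
        = (∑' n : ℕ, (if r' + t + 1 ≤ n then c (n - (r' + t + 1)) * z ^ n else 0) / Dc)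
          + ∑ k ∈ Finset.range (r' + 1), qc k * (z ^ k * Real.exp z) := by
          rw [tsum_div_const, Finset.mul_sum]
          congr 1
          exact Finset.sum_congr rfl fun k _ => by ring
      _ = (∑' n : ℕ, (if r' + t + 1 ≤ n then c (n - (r' + t + 1)) * z ^ n else 0) / Dc)
          + ∑ k ∈ Finset.range (r' + 1),
              ∑' n : ℕ, qc k * (if k ≤ n then z ^ n / (((n - k).factorial : ℕ) : ℝ) else 0) := by
          congr 1
          exact Finset.sum_congr rfl fun k _ => by rw [← hexp_shift k, tsum_mul_left]
      _ = (∑' n : ℕ, (if r' + t + 1 ≤ n then c (n - (r' + t + 1)) * z ^ n else 0) / Dc)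
          + ∑' n : ℕ, ∑ k ∈ Finset.range (r' + 1),
              qc k * (if k ≤ n then z ^ n / (((n - k).factorial : ℕ) : ℝ) else 0) := by
          congr 1
          exact (Summable.tsum_finsetSum fun k _ => hQk k).symm
      _ = ∑' n : ℕ, ((if r' + t + 1 ≤ n then c (n - (r' + t + 1)) * z ^ n else 0) / Dc
          + ∑ k ∈ Finset.range (r' + 1),
              qc k * (if k ≤ n then z ^ n / (((n - k).factorial : ℕ) : ℝ) else 0)) :=
          (Summable.tsum_add hHs (summable_sum fun k _ => hQk k)).symm
      _ = ∑' n : ℕ, (if n < t + 1 then pc n * z ^ n else 0) := tsum_congr hcore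
      _ = ∑ n ∈ Finset.range (t + 1), (if n < t + 1 then pc n * z ^ n else 0) :=
          tsum_eq_sum (fun n hn => if_neg (by simpa using hn))
      _ = ∑ n ∈ Finset.range (t + 1), pc n * z ^ n :=
          Finset.sum_congr rfl fun n hn => if_pos (by simpa using hn)
  -- the shifted tsum is z^(s-1) * H
  have hT1 : ∑' n : ℕ, (if r' + t + 1 ≤ n then c (n - (r' + t + 1)) * z ^ n else 0)
      = H * z ^ (r' + t + 1) := by
    calc ∑' n : ℕ, (if r' + t + 1 ≤ n then c (n - (r' + t + 1)) * z ^ n else 0)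
        = ∑' n : ℕ, (if r' + t + 1 ≤ n then
            (fun m => c m * z ^ m * z ^ (r' + t + 1)) (n - (r' + t + 1)) else 0) := by
          apply tsum_congr; intro n
          by_cases hn : r' + t + 1 ≤ n
          · simp only [if_pos hn]
            rw [mul_assoc, ← pow_add, show n - (r' + t + 1) + (r' + t + 1) = n from by omega]
          · simp [hn]
      _ = ∑' m : ℕ, c m * z ^ m * z ^ (r' + t + 1) :=
          shift_tsum (r' + t + 1) (fun m => c m * z ^ m * z ^ (r' + t + 1))
      _ = (∑' m : ℕ, c m * z ^ m) * z ^ (r' + t + 1) := tsum_mul_right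
      _ = H * z ^ (r' + t + 1) := by rw [← hH]
  rw [hT1] at key
  -- zpow normalization
  have hzpow : z ^ ((1 : ℤ) - ((r' + t + 2 : ℕ) : ℤ)) = (z ^ (r' + t + 1))⁻¹ := by
    rw [show (1 : ℤ) - ((r' + t + 2 : ℕ) : ℤ) = -((r' + t + 1 : ℕ) : ℤ) from by push_cast; ring,
      zpow_neg, zpow_natCast]
  rw [hzpow]
  -- conclude
  have hzp : z ^ (r' + t + 1) ≠ 0 := pow_ne_zero _ hz
  have hfinal : Ps - Real.exp z * Qs = H * z ^ (r' + t + 1) / Dc := by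
    rw [← key]; ring
  rw [hfinal]
  field_simp
end

section
/- Let P_N be the set of functions x ↦ e^(bx) x^n with b real and n a nonnegative integer with n < N, and let *̃ be the modified finite convolution which equals the finite convolution ∫₀^x f(t)g(x−t)dt when the exponential rates differ and is defined to be 0 when they coincide. Then the real linear span of P_N, equipped with *̃, is closed under *̃ (i.e., forms an algebra over ℝ) for every N. -/
open MeasureTheory Real

/-- The set `P_N` of functions `x ↦ e^(bx) xⁿ` with `b ∈ ℝ` and `n < N`. -/
def expMonomials (N : ℕ) : Set (ℝ → ℝ) :=
  {f | ∃ (b : ℝ) (n : ℕ), n < N ∧ f = fun x => Real.exp (b * x) * x ^ n}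

/-- The modified finite convolution of `e^(ax)xⁿ` and `e^(bx)xᵐ`: the finite convolution
`∫₀^x f(t)g(x−t)dt` when `a ≠ b`, and `0` when `a = b`. -/
noncomputable def modConv (a : ℝ) (n : ℕ) (b : ℝ) (m : ℕ) : ℝ → ℝ :=
  if a = b then 0
  else fun x => ∫ t in (0:ℝ)..x,
    (Real.exp (a * t) * t ^ n) * (Real.exp (b * (x - t)) * (x - t) ^ m)

lemma modConv_rec (a b : ℝ) (h : a ≠ b) (n m : ℕ) :
    modConv a n b m =
      ((0:ℝ)^m / (a-b)) • (fun x => Real.exp (a*x) * x^n)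
      - ((0:ℝ)^n / (a-b)) • (fun x => Real.exp (b*x) * x^m)
      - ((n:ℝ)/(a-b)) • modConv a (n-1) b m
      + ((m:ℝ)/(a-b)) • modConv a n b (m-1) := by
  have hc : a - b ≠ 0 := sub_ne_zero.mpr h
  funext x
  simp only [modConv, if_neg h, Pi.add_apply, Pi.sub_apply, Pi.smul_apply, smul_eq_mul]
  set u : ℝ → ℝ := fun t => t ^ n * (x - t) ^ m with hu_def
  set u' : ℝ → ℝ := fun t => (n:ℝ) * t ^ (n-1) * (x - t) ^ m
      - (m:ℝ) * t ^ n * (x - t) ^ (m-1) with hu'_def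
  set v : ℝ → ℝ := fun t => Real.exp (b*x + (a-b)*t) / (a-b) with hv_def
  set v' : ℝ → ℝ := fun t => Real.exp (b*x + (a-b)*t) with hv'_def
  have hexp : ∀ t : ℝ, Real.exp (a*t) * Real.exp (b*(x-t)) = Real.exp (b*x + (a-b)*t) := by
    intro t; rw [← Real.exp_add]; ring_nf
  have hu : ∀ t ∈ Set.uIcc (0:ℝ) x, HasDerivAt u (u' t) t := by
    intro t _
    have h1 : HasDerivAt (fun t : ℝ => t ^ n) ((n:ℝ) * t ^ (n-1)) t := hasDerivAt_pow n t
    have h2 : HasDerivAt (fun t : ℝ => (x - t) ^ m)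
        (-((m:ℝ) * (x - t) ^ (m-1))) t := by
      have := (hasDerivAt_pow m (x - t)).comp t ((hasDerivAt_id t).const_sub x)
      simpa [Function.comp_def] using this
    have := h1.mul h2
    refine this.congr_deriv ?_
    simp only [hu'_def]; ring
  have hv : ∀ t ∈ Set.uIcc (0:ℝ) x, HasDerivAt v (v' t) t := by
    intro t _
    have hlin : HasDerivAt (fun t : ℝ => b*x + (a-b)*t) (a-b) t := by
      have := ((hasDerivAt_id t).const_mul (a-b)).const_add (b*x)
      simpa using this
    have := ((Real.hasDerivAt_exp (b*x + (a-b)*t)).comp t hlin).div_const (a-b)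
    refine this.congr_deriv ?_
    simp only [hv'_def]
    field_simp
  have hu'int : IntervalIntegrable u' volume 0 x := by
    apply Continuous.intervalIntegrable; fun_prop
  have hv'int : IntervalIntegrable v' volume 0 x := by
    apply Continuous.intervalIntegrable; fun_prop
  have ibp := intervalIntegral.integral_mul_deriv_eq_deriv_mul hu hv hu'int hv'int
  have heq : (∫ t in (0:ℝ)..x, (Real.exp (a*t) * t^n) * (Real.exp (b*(x-t)) * (x-t)^m))
      = ∫ t in (0:ℝ)..x, u t * v' t := by
    apply intervalIntegral.integral_congr
    intro t _
    simp only [hu_def, hv'_def]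
    rw [← hexp t]; ring
  have heq2 : (∫ t in (0:ℝ)..x, u' t * v t)
      = (n:ℝ)/(a-b) * (∫ t in (0:ℝ)..x,
          (Real.exp (a*t) * t^(n-1)) * (Real.exp (b*(x-t)) * (x-t)^m))
        - (m:ℝ)/(a-b) * (∫ t in (0:ℝ)..x,
          (Real.exp (a*t) * t^n) * (Real.exp (b*(x-t)) * (x-t)^(m-1))) := by
    have e1 : ∀ t ∈ Set.uIcc (0:ℝ) x, u' t * v t =
        (n:ℝ)/(a-b) * ((Real.exp (a*t) * t^(n-1)) * (Real.exp (b*(x-t)) * (x-t)^m))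
        - (m:ℝ)/(a-b) * ((Real.exp (a*t) * t^n) * (Real.exp (b*(x-t)) * (x-t)^(m-1))) := by
      intro t _
      simp only [hu'_def, hv_def]
      rw [show ((Real.exp (a*t) * t^(n-1)) * (Real.exp (b*(x-t)) * (x-t)^m))
          = (t^(n-1) * (x-t)^m) * (Real.exp (a*t) * Real.exp (b*(x-t))) by ring,
        show ((Real.exp (a*t) * t^n) * (Real.exp (b*(x-t)) * (x-t)^(m-1)))
          = (t^n * (x-t)^(m-1)) * (Real.exp (a*t) * Real.exp (b*(x-t))) by ring,
        hexp t]
      field_simp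
    rw [intervalIntegral.integral_congr e1, intervalIntegral.integral_sub,
      intervalIntegral.integral_const_mul, intervalIntegral.integral_const_mul]
    · apply Continuous.intervalIntegrable; fun_prop
    · apply Continuous.intervalIntegrable; fun_prop
  rw [heq, ibp, heq2]
  simp only [hu_def, hv_def]
  rw [show b*x + (a-b)*x = a*x by ring, sub_self, mul_zero, add_zero, sub_zero]
  ring

/-- The real linear span of `P_N` is closed under the modified finite convolution `*̃`
(extended canonically from the generators), i.e. `(⟨P_N⟩_ℝ, *̃)` is an algebra over `ℝ`,
for every `N`. -/
theorem span_expMonomials_closed_under_modConv (N : ℕ) :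
    ∀ (a b : ℝ) (n m : ℕ), n < N → m < N →
      modConv a n b m ∈ Submodule.span ℝ (expMonomials N) := by
  intro a b n m hn hm
  by_cases hab : a = b
  · have : modConv a n b m = 0 := by simp [modConv, hab]
    rw [this]; exact zero_mem _
  · have key : ∀ k : ℕ, ∀ n m : ℕ, n + m ≤ k → n < N → m < N →
        modConv a n b m ∈ Submodule.span ℝ (expMonomials N) := by
      intro k
      induction k using Nat.strong_induction_on with
      | _ k IH =>
        intro n m hle hn hm
        rw [modConv_rec a b hab n m]
        have mem_a : (fun x => Real.exp (a*x) * x^n) ∈ Submodule.span ℝ (expMonomials N) :=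
          Submodule.subset_span ⟨a, n, hn, rfl⟩
        have mem_b : (fun x => Real.exp (b*x) * x^m) ∈ Submodule.span ℝ (expMonomials N) :=
          Submodule.subset_span ⟨b, m, hm, rfl⟩
        refine add_mem (sub_mem (sub_mem (Submodule.smul_mem _ _ mem_a)
          (Submodule.smul_mem _ _ mem_b)) ?_) ?_
        · rcases n with _ | p
          · have : (((0:ℕ):ℝ)/(a-b)) • modConv a (0-1) b m = 0 := by
              simp
            rw [this]; exact zero_mem _
          · exact Submodule.smul_mem _ _
              (IH (p + m) (by omega) p m le_rfl (by omega) hm)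
        · rcases m with _ | q
          · have : (((0:ℕ):ℝ)/(a-b)) • modConv a n b (0-1) = 0 := by
              simp
            rw [this]; exact zero_mem _
          · exact Submodule.smul_mem _ _
              (IH (n + q) (by omega) n q le_rfl hn (by omega))
    exact key (n + m) n m le_rfl hn hm
end
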